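/- Let F, G ∈ ℤ[x] and let ℓ be an integer with ℓ > max(deg(FG), ‖FG‖₁). Suppose H = F·G = Σᵢ cᵢ x^{eᵢ}, and let p be a good difference-prime for supp(H). Define H₁ = F(x)·G(x) mod (ℓ², x^p − 1) and H₂ = F((ℓ+1)x)·G((ℓ+1)x) mod (ℓ², x^p − 1). Then for each i, the coefficient of x^{eᵢ mod p} in H₁ is cᵢ mod ℓ² and in H₂ is cᵢ·(eᵢ·ℓ + 1) mod ℓ². Hence if cᵢ is invertible modulo ℓ (e.g., gcd(cᵢ, ℓ) = 1), the exponent eᵢ can be recovered as ((coefficient ratio) − 1)/ℓ. -/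
import Mathlib
open Polynomial

lemma comp_C_mul_X_coeff (P : ℤ[X]) (a : ℤ) (n : ℕ) :
    (P.comp (C a * X)).coeff n = P.coeff n * a ^ n := by
  rw [comp_eq_sum_left, Polynomial.sum, finset_sum_coeff]
  simp only [mul_pow, ← C_pow, ← mul_assoc, ← C_mul, coeff_C_mul, coeff_X_pow]
  simp only [mul_ite, mul_one, mul_zero]
  simp only [eq_comm (a := n)]
  rw [Finset.sum_ite_eq' P.support n (fun e => P.coeff e * a ^ e)]
  split_ifs with h
  · rfl
  · simp [Polynomial.notMem_support_iff.mp h]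

lemma pow_modeq (ℓ : ℤ) (e : ℕ) : (ℓ + 1) ^ e ≡ (e : ℤ) * ℓ + 1 [ZMOD ℓ ^ 2] := by
  induction e with
  | zero => simp
  | succ n ih =>
    calc (ℓ+1)^(n+1) = (ℓ+1)^n * (ℓ+1) := pow_succ _ _
      _ ≡ ((n:ℤ)*ℓ+1) * (ℓ+1) [ZMOD ℓ^2] := ih.mul_right _
      _ ≡ (((n:ℕ)+1:ℤ))*ℓ+1 [ZMOD ℓ^2] := Int.ModEq.symm (Int.modEq_iff_dvd.mpr ⟨(n:ℤ), by ring⟩)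
      _ = ((n+1 : ℕ):ℤ)*ℓ+1 := by push_cast; ring

lemma modsum_coeff (Q : ℤ[X]) (p n : ℕ) :
    (∑ e ∈ Q.support, C (Q.coeff e) * X ^ (e % p)).coeff n
      = ∑ e ∈ Q.support, if e % p = n then Q.coeff e else 0 := by
  rw [finset_sum_coeff]
  refine Finset.sum_congr rfl fun e _ => ?_
  rw [coeff_C_mul, coeff_X_pow]
  simp [eq_comm]

theorem exponent_recovery (F G : Polynomial ℤ) (ℓ : ℤ) (p : ℕ) (hp : 0 < p)
    (hℓ : ((F * G).natDegree : ℤ) < ℓ ∧ (∑ e ∈ (F * G).support, |(F * G).coeff e|) < ℓ)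
    (hgood : ∀ e ∈ (F * G).support, ∀ e' ∈ (F * G).support, e % p = e' % p → e = e') :
    let H := F * G
    let H₁ := ∑ e ∈ H.support, Polynomial.C (H.coeff e) * Polynomial.X ^ (e % p)
    let H₂pre := (F.comp (Polynomial.C (ℓ + 1) * Polynomial.X)) *
      (G.comp (Polynomial.C (ℓ + 1) * Polynomial.X))
    let H₂ := ∑ e ∈ H₂pre.support, Polynomial.C (H₂pre.coeff e) * Polynomial.X ^ (e % p)
    (∀ e ∈ H.support,
        H₁.coeff (e % p) ≡ H.coeff e [ZMOD ℓ ^ 2] ∧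
        H₂.coeff (e % p) ≡ H.coeff e * ((e : ℤ) * ℓ + 1) [ZMOD ℓ ^ 2]) ∧
    (∀ e ∈ H.support, IsCoprime (H.coeff e) ℓ →
      ∀ e' : ℕ, (e' : ℤ) < ℓ →
        H.coeff e * ((e' : ℤ) * ℓ + 1) ≡ H₂.coeff (e % p) [ZMOD ℓ ^ 2] → e' = e) := by
  intro H H₁ H₂pre H₂
  have hH2pre : H₂pre = H.comp (C (ℓ + 1) * X) := (mul_comp F G _).symm
  have hcoeff2 : ∀ n, H₂pre.coeff n = H.coeff n * (ℓ + 1) ^ n := by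
    intro n; rw [hH2pre, comp_C_mul_X_coeff]
  have hsub : H₂pre.support ⊆ H.support := by
    intro n hn
    rw [mem_support_iff] at hn ⊢
    intro h0; apply hn; rw [hcoeff2, h0, zero_mul]
  -- key coefficient computations
  have hc1 : ∀ e ∈ H.support, H₁.coeff (e % p) = H.coeff e := by
    intro e he
    rw [modsum_coeff]
    rw [Finset.sum_eq_single e]
    · simp
    · intro e' he' hne
      rw [if_neg]
      intro heq
      exact hne (hgood e' he' e he heq)
    · intro h; exact absurd he h
  have hc2 : ∀ e ∈ H.support, H₂.coeff (e % p) = H.coeff e * (ℓ + 1) ^ e := by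
    intro e he
    show (∑ e' ∈ H₂pre.support, C (H₂pre.coeff e') * X ^ (e' % p)).coeff (e % p) = _
    rw [modsum_coeff]
    rw [Finset.sum_subset hsub (fun x _ hx => by
      rw [notMem_support_iff.mp hx]; simp)]
    rw [Finset.sum_eq_single e]
    · rw [if_pos rfl, hcoeff2]
    · intro e' he' hne
      rw [if_neg]
      intro heq
      exact hne (hgood e' he' e he heq)
    · intro h; exact absurd he h
  have hmain : ∀ e ∈ H.support,
      H₁.coeff (e % p) ≡ H.coeff e [ZMOD ℓ ^ 2] ∧
      H₂.coeff (e % p) ≡ H.coeff e * ((e : ℤ) * ℓ + 1) [ZMOD ℓ ^ 2] := by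
    intro e he
    refine ⟨by rw [hc1 e he], ?_⟩
    rw [hc2 e he]
    exact (pow_modeq ℓ e).mul_left _
  refine ⟨hmain, ?_⟩
  intro e he hcop e' he' hmod
  have h2 := (hmain e he).2
  have : H.coeff e * ((e' : ℤ) * ℓ + 1) ≡ H.coeff e * ((e : ℤ) * ℓ + 1) [ZMOD ℓ ^ 2] :=
    hmod.trans h2
  have hdvd : (ℓ ^ 2 : ℤ) ∣ ((e : ℤ) * ℓ - (e' : ℤ) * ℓ) := by
    have hd := Int.ModEq.dvd this
    have hd2 : (ℓ ^ 2 : ℤ) ∣ H.coeff e * (((e : ℤ) * ℓ) - ((e' : ℤ) * ℓ)) := by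
      have : H.coeff e * (((e : ℤ) * ℓ) - ((e' : ℤ) * ℓ))
          = H.coeff e * ((e : ℤ) * ℓ + 1) - H.coeff e * ((e' : ℤ) * ℓ + 1) := by ring
      rw [this]; exact hd
    exact (IsCoprime.pow_left hcop.symm).dvd_of_dvd_mul_left hd2
  have hℓpos : 0 < ℓ := lt_of_le_of_lt (Finset.sum_nonneg fun i _ => abs_nonneg _) hℓ.2
  have hdvd' : ℓ ∣ ((e : ℤ) - (e' : ℤ)) := by
    rcases hdvd with ⟨k, hk⟩
    refine ⟨k, ?_⟩
    have hℓne : ℓ ≠ 0 := hℓpos.ne'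
    have : ((e : ℤ) - e') * ℓ = ℓ * k * ℓ := by
      rw [sub_mul]; rw [show ℓ * k * ℓ = ℓ^2 * k by ring, ← hk]
    exact mul_right_cancel₀ hℓne (by linarith [this])
  have heb : (e : ℤ) < ℓ := by
    have := Polynomial.le_natDegree_of_mem_supp e he
    calc (e : ℤ) ≤ (H.natDegree : ℤ) := by exact_mod_cast this
      _ < ℓ := hℓ.1
  have : (e : ℤ) - e' = 0 := by
    rcases hdvd' with ⟨k, hk⟩
    have h1 : -(ℓ) < (e:ℤ) - e' := by
      have : (0:ℤ) ≤ (e:ℤ) := Int.natCast_nonneg e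
      linarith
    have h2 : (e:ℤ) - e' < ℓ := by
      have : (0:ℤ) ≤ (e':ℤ) := Int.natCast_nonneg e'
      linarith
    rw [hk] at h1 h2 ⊢
    have : k = 0 := by nlinarith
    rw [this, mul_zero]
  have : (e' : ℤ) = e := by linarith
  exact_mod_cast this
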